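/- For any prime p, if H is a graph and σ is an automorphism of H of order p, then for any graph G, the number of homomorphisms from G to H is congruent modulo p to the number of homomorphisms from G to H^σ. -/

import Mathlib

structure SymGraph (V : Type) where
  Adj : V → V → Prop
  symm : ∀ u v, Adj u v → Adj v u

def SymGraph.IsHom {V W : Type} (G : SymGraph V) (H : SymGraph W) (f : V → W) : Prop :=
  ∀ u v, G.Adj u v → H.Adj (f u) (f v)

noncomputable def homCount {V W : Type} (G : SymGraph V) (H : SymGraph W) : ℕ :=
  Nat.card {f : V → W // G.IsHom H f}

def SymGraph.IsAut {V : Type} (H : SymGraph V) (σ : Equiv.Perm V) : Prop :=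
  ∀ u v, H.Adj u v ↔ H.Adj (σ u) (σ v)

def SymGraph.fixedSubgraph {V : Type} (H : SymGraph V) (σ : Equiv.Perm V) :
    SymGraph {v : V // σ v = v} :=
  ⟨fun u v => H.Adj u v, fun u v h => H.symm u v h⟩

/-- The automorphisms of a graph form a subgroup of the permutation group. -/
def SymGraph.autSubgroup {V : Type} (H : SymGraph V) : Subgroup (Equiv.Perm V) where
  carrier := {τ | H.IsAut τ}
  one_mem' := fun u v => Iff.rfl
  mul_mem' := by
    intro a b ha hb u v
    exact (hb u v).trans (ha (b u) (b v))
  inv_mem' := by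
    intro a ha u v
    have := ha (a⁻¹ u) (a⁻¹ v)
    simpa using this.symm

theorem stmt1 (p : ℕ) (hp : p.Prime) {V : Type} [Fintype V] (H : SymGraph V)
    (σ : Equiv.Perm V) (hσ : H.IsAut σ) (hord : orderOf σ = p)
    {U : Type} [Fintype U] (G : SymGraph U) :
    homCount G H ≡ homCount G (H.fixedSubgraph σ) [MOD p] := by
  classical
  haveI : Fact p.Prime := ⟨hp⟩
  set Z := Subgroup.zpowers σ with hZ
  -- every element of Z is an automorphism
  have hmem : ∀ τ : Z, H.IsAut (τ : Equiv.Perm V) := by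
    rintro ⟨τ, hτ⟩
    have : τ ∈ H.autSubgroup := by
      have : Subgroup.zpowers σ ≤ H.autSubgroup :=
        (Subgroup.zpowers_le).2 hσ
      exact this hτ
    exact this
  set A := {f : U → V // G.IsHom H f} with hA
  letI : SMul Z A := ⟨fun τ f => ⟨(τ : Equiv.Perm V) ∘ f.1, by
    intro u v huv
    exact (hmem τ (f.1 u) (f.1 v)).1 (f.2 u v huv)⟩⟩
  have smul_def : ∀ (τ : Z) (f : A), (τ • f).1 = (τ : Equiv.Perm V) ∘ f.1 :=
    fun _ _ => rfl
  letI : MulAction Z A :=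
    { one_smul := by intro f; apply Subtype.ext; rfl
      mul_smul := by intro a b f; apply Subtype.ext; rfl }
  -- Z is a p-group
  have hcard : Nat.card Z = p ^ 1 := by
    rw [pow_one, hZ, Nat.card_zpowers, hord]
  have hpg : IsPGroup p Z := IsPGroup.of_card hcard
  haveI : Finite A := by
    have : Finite (U → V) := inferInstance
    exact Subtype.finite
  have hmod := hpg.card_modEq_card_fixedPoints A
  -- identify fixed points with homs into the fixed subgraph
  have key : Nat.card (MulAction.fixedPoints Z A)
      = homCount G (H.fixedSubgraph σ) := by
    apply Nat.card_congr
    refine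
      { toFun := fun f => ⟨fun u => ⟨f.1.1 u, ?_⟩, ?_⟩
        invFun := fun g => ⟨⟨fun u => (g.1 u).1, ?_⟩, ?_⟩
        left_inv := ?_
        right_inv := ?_ }
    · -- σ fixes f.1.1 u
      obtain ⟨⟨f, hf⟩, hfix⟩ := f
      have := hfix ⟨σ, Subgroup.mem_zpowers σ⟩
      have := congrArg (fun g => g.1 u) this
      exact this
    · intro u v huv
      exact f.1.2 u v huv
    · intro u v huv
      exact g.2 u v huv
    · intro τ
      apply Subtype.ext
      obtain ⟨τ, n, rfl⟩ := τ
      funext u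
      show (σ ^ n) ((g.1 u).1) = (g.1 u).1
      exact Function.IsFixedPt.perm_zpow (g.1 u).2 n
    · intro f
      apply Subtype.ext; apply Subtype.ext; rfl
    · intro g
      apply Subtype.ext; funext u; apply Subtype.ext; rfl
  have key2 : Nat.card A = homCount G H := rfl
  rw [← key2, ← key]
  exact hmod
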